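/- Let 1 ≤ M < N and let Σ₁ = diag(σ₁₁²,…,σ₁ₙ²), Σ₂ = diag(σ₂₁²,…,σ₂ₙ²), Σ₃ = diag(0,…,0, σ₃,ₙ₋ₘ₊₁²,…,σ₃ₙ²) be N×N diagonal matrices with σ₁ᵢ > 0 and σ₂ᵢ > 0 for all i, σ₃ⱼ > 0 for j > N−M, and the first N−M diagonal entries of Σ₃ equal to zero. Then the weight vector q_H(τ) := Π(τ)⁻¹1 / (1ᵀΠ(τ)⁻¹1), where Π(τ) := τΣ₁ + (τ³/6)Σ₂ + (13τ⁵/360)Σ₃, converges as τ → ∞ to the vector whose first N−M entries are σ₂ᵢ⁻² / (∑_{j=1}^{N−M} σ₂ⱼ⁻²) and whose last M entries are 0. -/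

import Mathlib

open Matrix

/-- Equation (30) of the paper: the optimal weight vector `q_H(τ)` converges, as `τ → ∞`,
to the vector putting weight `σ₂ᵢ⁻² / ∑_{j ≤ N−M} σ₂ⱼ⁻²` on each cesium-type clock and
zero weight on every hydrogen-maser-type clock. -/
theorem stmt_4 (N M : ℕ) (hM : 1 ≤ M) (hMN : M < N)
    (s1 s2 s3 : Fin N → ℝ)
    (hs1 : ∀ i, 0 < s1 i) (hs2 : ∀ i, 0 < s2 i)
    (hs3 : ∀ i : Fin N, N - M ≤ (i : ℕ) → 0 < s3 i)
    (one : Fin N → ℝ) (hone : one = fun _ => 1)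
    (S1 S2 S3 : Matrix (Fin N) (Fin N) ℝ)
    (hS1 : S1 = Matrix.diagonal (fun i => (s1 i)^2))
    (hS2 : S2 = Matrix.diagonal (fun i => (s2 i)^2))
    (hS3 : S3 = Matrix.diagonal (fun i => if i.val < N - M then 0 else (s3 i)^2))
    (Pi : ℝ → Matrix (Fin N) (Fin N) ℝ)
    (hPi : ∀ τ, Pi τ = τ • S1 + (τ^3/6) • S2 + (13*τ^5/360) • S3)
    (qH : ℝ → Fin N → ℝ)
    (hqH : ∀ τ, qH τ = (one ⬝ᵥ ((Pi τ)⁻¹ *ᵥ one))⁻¹ • ((Pi τ)⁻¹ *ᵥ one)) :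
    Filter.Tendsto qH Filter.atTop
      (nhds (fun i => if i.val < N - M then
          ((s2 i)^2)⁻¹ /
            (∑ j ∈ Finset.univ.filter (fun j : Fin N => j.val < N - M), ((s2 j)^2)⁻¹)
        else 0)) := by
  subst hone hS1 hS2 hS3
  set c : Fin N → ℝ := fun i => if i.val < N - M then 0 else (s3 i)^2 with hc
  have hcnn : ∀ i, 0 ≤ c i := by
    intro i; simp only [hc]; split
    · exact le_refl 0
    · positivity
  set d : ℝ → Fin N → ℝ := fun τ i =>
    τ*(s1 i)^2 + (τ^3/6)*(s2 i)^2 + (13*τ^5/360)*(c i) with hd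
  -- Pi τ is the diagonal matrix with entries d τ
  have hPid : ∀ τ, Pi τ = Matrix.diagonal (d τ) := by
    intro τ
    rw [hPi]
    ext i j
    by_cases h : i = j
    · subst h
      simp [Matrix.diagonal_apply_eq, hd, mul_comm]
    · simp [Matrix.diagonal_apply_ne _ h, h]
  -- positivity of diagonal entries for τ > 0
  have hdpos : ∀ τ : ℝ, 0 < τ → ∀ i, 0 < d τ i := by
    intro τ hτ i
    have h1 : 0 < τ*(s1 i)^2 := mul_pos hτ (pow_pos (hs1 i) 2)
    have h2 : 0 ≤ (τ^3/6)*(s2 i)^2 :=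
      mul_nonneg (div_nonneg (pow_nonneg hτ.le 3) (by norm_num)) (sq_nonneg _)
    have h3 : 0 ≤ (13*τ^5/360)*(c i) := by
      have h5 : (0:ℝ) ≤ 13*τ^5/360 := by
        have : (0:ℝ) ≤ τ^5 := pow_nonneg hτ.le 5
        linarith
      exact mul_nonneg h5 (hcnn i)
    simp only [hd]
    linarith
  -- the normalized weights
  set g : ℝ → Fin N → ℝ := fun τ j =>
    ((s1 j)^2/τ^2 + (s2 j)^2/6 + (13*τ^2/360)*(c j))⁻¹ with hg
  -- eventual formula for qH
  have hkey : ∀ τ : ℝ, 0 < τ → ∀ i, qH τ i = (∑ j, g τ j)⁻¹ * g τ i := by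
    intro τ hτ i
    have hτ3 : (τ:ℝ)^3 ≠ 0 := pow_ne_zero 3 hτ.ne'
    have hinv : (Pi τ)⁻¹ = Matrix.diagonal (fun j => (d τ j)⁻¹) := by
      rw [hPid]
      apply Matrix.inv_eq_right_inv
      rw [Matrix.diagonal_mul_diagonal]
      have : (fun j => d τ j * (d τ j)⁻¹) = fun _ => (1:ℝ) := by
        funext j
        exact mul_inv_cancel₀ (hdpos τ hτ j).ne'
      rw [this, Matrix.diagonal_one]
    have hdg : ∀ j, (d τ j)⁻¹ = (τ^3)⁻¹ * g τ j := by
      intro j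
      have : d τ j = τ^3 * ((s1 j)^2/τ^2 + (s2 j)^2/6 + (13*τ^2/360)*(c j)) := by
        simp only [hd]
        field_simp
      rw [this, mul_inv, hg]
    have hmv : (Pi τ)⁻¹ *ᵥ (fun _ => (1:ℝ)) = fun j => (d τ j)⁻¹ := by
      funext j
      rw [hinv]
      simp [Matrix.mulVec_diagonal]
    have hdot : ((fun _ => (1:ℝ)) ⬝ᵥ fun j => (d τ j)⁻¹) = ∑ j, (d τ j)⁻¹ := by
      simp [dotProduct]
    rw [hqH, hmv, hdot]
    simp only [_root_.Pi.smul_apply, smul_eq_mul]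
    simp only [hdg]
    rw [← Finset.mul_sum, mul_inv, inv_inv]
    calc τ ^ 3 * (∑ j, g τ j)⁻¹ * ((τ ^ 3)⁻¹ * g τ i)
        = (τ ^ 3 * (τ ^ 3)⁻¹) * ((∑ j, g τ j)⁻¹ * g τ i) := by ring
      _ = (∑ j, g τ j)⁻¹ * g τ i := by rw [mul_inv_cancel₀ hτ3, one_mul]
  -- the limits
  set L : Fin N → ℝ := fun j => if j.val < N - M then ((s2 j)^2/6)⁻¹ else 0 with hL
  have hgt : ∀ j : Fin N, Filter.Tendsto (fun τ => g τ j) Filter.atTop (nhds (L j)) := by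
    intro j
    have hsq : Filter.Tendsto (fun τ : ℝ => τ^2) Filter.atTop Filter.atTop :=
      Filter.tendsto_pow_atTop (by norm_num)
    have h1 : Filter.Tendsto (fun τ : ℝ => (s1 j)^2/τ^2) Filter.atTop (nhds 0) := by
      simpa [div_eq_mul_inv] using (hsq.inv_tendsto_atTop).const_mul ((s1 j)^2)
    by_cases h : j.val < N - M
    · have hcz : c j = 0 := by simp [hc, h]
      have hLj : L j = ((s2 j)^2/6)⁻¹ := by simp [hL, h]
      have hinner : Filter.Tendsto
          (fun τ : ℝ => (s1 j)^2/τ^2 + (s2 j)^2/6 + (13*τ^2/360)*(c j))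
          Filter.atTop (nhds ((s2 j)^2/6)) := by
        have h2 : Filter.Tendsto (fun τ : ℝ => (s1 j)^2/τ^2 + (s2 j)^2/6)
            Filter.atTop (nhds (0 + (s2 j)^2/6)) :=
          h1.add tendsto_const_nhds
        simpa [hcz] using h2
      have hne : (s2 j)^2/6 ≠ 0 := by
        have := hs2 j; positivity
      rw [hg, hLj]
      exact hinner.inv₀ hne
    · have hLj : L j = 0 := by simp [hL, h]
      have hcpos : 0 < c j := by
        simp only [hc, if_neg h]
        exact pow_pos (hs3 j (le_of_not_gt h)) 2
      have h3 : Filter.Tendsto (fun τ : ℝ => (13*τ^2/360)*(c j))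
          Filter.atTop Filter.atTop := by
        have : Filter.Tendsto (fun τ : ℝ => τ^2 * (13/360*c j))
            Filter.atTop Filter.atTop :=
          hsq.atTop_mul_const' (by positivity)
        refine this.congr (fun τ => by ring)
      have hinner : Filter.Tendsto
          (fun τ : ℝ => (s1 j)^2/τ^2 + (s2 j)^2/6 + (13*τ^2/360)*(c j))
          Filter.atTop Filter.atTop :=
        ((h1.add tendsto_const_nhds).add_atTop h3)
      rw [hg, hLj]
      exact hinner.inv_tendsto_atTop
  have hsum : Filter.Tendsto (fun τ => ∑ j, g τ j) Filter.atTop (nhds (∑ j, L j)) := by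
    exact tendsto_finset_sum _ fun j _ => hgt j
  have hLnn : ∀ j, 0 ≤ L j := by
    intro j; simp only [hL]; split
    · positivity
    · exact le_refl 0
  have hsumpos : 0 < ∑ j, L j := by
    have h0 : (0:ℕ) < N := lt_of_le_of_lt (Nat.zero_le M) hMN
    refine Finset.sum_pos' (fun j _ => hLnn j) ⟨⟨0, h0⟩, Finset.mem_univ _, ?_⟩
    have : (0:ℕ) < N - M := Nat.sub_pos_of_lt hMN
    simp only [hL, if_pos this]
    have := hs2 ⟨0, h0⟩; positivity
  -- identify the target value
  have htarget : (fun i : Fin N => if i.val < N - M then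
        ((s2 i)^2)⁻¹ /
          (∑ j ∈ Finset.univ.filter (fun j : Fin N => j.val < N - M), ((s2 j)^2)⁻¹)
      else 0) = fun i => (∑ j, L j)⁻¹ * L i := by
    funext i
    have hsumL : ∑ j, L j =
        6 * ∑ j ∈ Finset.univ.filter (fun j : Fin N => j.val < N - M), ((s2 j)^2)⁻¹ := by
      rw [Finset.mul_sum, hL]
      rw [← Finset.sum_filter]
      refine Finset.sum_congr rfl fun j hj => ?_
      have := (hs2 j).ne'
      field_simp
    by_cases h : i.val < N - M
    · have hLi : L i = 6 * ((s2 i)^2)⁻¹ := by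
        simp only [hL, if_pos h]
        have := (hs2 i).ne'
        field_simp
      rw [if_pos h, hLi, hsumL, mul_inv]
      have hS : (0:ℝ) < ∑ j ∈ Finset.univ.filter (fun j : Fin N => j.val < N - M),
          ((s2 j)^2)⁻¹ := by
        have : 0 < (6:ℝ) * ∑ j ∈ Finset.univ.filter (fun j : Fin N => j.val < N - M),
            ((s2 j)^2)⁻¹ := hsumL ▸ hsumpos
        linarith
      field_simp
    · rw [if_neg h]
      have hLi : L i = 0 := by simp only [hL]; rw [if_neg h]
      rw [hLi, mul_zero]
  rw [htarget]
  rw [tendsto_pi_nhds]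
  intro i
  have hlim : Filter.Tendsto (fun τ => (∑ j, g τ j)⁻¹ * g τ i) Filter.atTop
      (nhds ((∑ j, L j)⁻¹ * L i)) :=
    (hsum.inv₀ hsumpos.ne').mul (hgt i)
  refine hlim.congr' ?_
  filter_upwards [Filter.eventually_gt_atTop 0] with τ hτ
  exact (hkey τ hτ i).symm
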